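/- The Choi map φ[2,0,1] on M₃(ℂ) (φ[2,0,1](x) has diagonal part diag(2x₁₁+x₃₃, 2x₂₂+x₁₁, 2x₃₃+x₂₂) minus the diagonal of x, and off-diagonal part −xᵢⱼ for i≠j) is a positive map: it sends every positive semidefinite 3×3 matrix to a positive semidefinite matrix. -/

import Mathlib

open Matrix
open scoped ComplexOrder

private lemma amgm3Choi (u v w : ℝ) (hu : 0 ≤ u) (hv : 0 ≤ v) (hw : 0 ≤ w) :
    3*(u*v*w) ≤ u^2*v + v^2*w + w^2*u := by
  nlinarith [mul_nonneg hv (sq_nonneg (u-w)), mul_nonneg hw (sq_nonneg (v-u)),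
    mul_nonneg hu (sq_nonneg (w-v)), mul_nonneg hu (sq_nonneg (u-v)),
    mul_nonneg hv (sq_nonneg (v-w)), mul_nonneg hw (sq_nonneg (w-u)),
    mul_nonneg (mul_nonneg hu hv) hw]

private lemma sixkeyChoi (a b c p q r : ℝ) (ha : 0 ≤ a) (hb : 0 ≤ b) (hc : 0 ≤ c)
    (hp : 0 ≤ p) (hq : 0 ≤ q) (hr : 0 ≤ r) :
    2*(a*b*p*q + b*c*q*r + c*a*p*r) ≤
      a^2*p^2 + a^2*q^2 + b^2*q^2 + b^2*r^2 + c^2*r^2 + c^2*p^2 := by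
  rcases ha.eq_or_lt with h | h
  · subst h
    nlinarith [sq_nonneg (b*q - c*r), sq_nonneg (b*r), sq_nonneg (c*p)]
  · have hdet : 0 ≤ a^4*b^2 + b^4*c^2 + c^4*a^2 - 3*a^2*b^2*c^2 := by
      nlinarith [amgm3Choi (a^2) (b^2) (c^2) (sq_nonneg a) (sq_nonneg b) (sq_nonneg c)]
    have hK : 0 < (a^2 + c^2) * (a^4 + a^2*c^2 + b^2*c^2) := by positivity
    have hid : (a^2+c^2) * (a^4+a^2*c^2+b^2*c^2) *
        ((a^2*p^2 + a^2*q^2 + b^2*q^2 + b^2*r^2 + c^2*r^2 + c^2*p^2)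
          - 2*(a*b*p*q + b*c*q*r + c*a*p*r))
        = (a^4+a^2*c^2+b^2*c^2) * ((a^2+c^2)*p - a*b*q - a*c*r)^2
          + ((a^4+a^2*c^2+b^2*c^2)*q - b*c*(2*a^2+c^2)*r)^2
          + (a^2+c^2) * (a^4*b^2 + b^4*c^2 + c^4*a^2 - 3*a^2*b^2*c^2) * r^2 := by
      ring
    nlinarith [hid, hK, mul_nonneg (by positivity : (0:ℝ) ≤ a^4+a^2*c^2+b^2*c^2)
        (sq_nonneg ((a^2+c^2)*p - a*b*q - a*c*r)),
      sq_nonneg ((a^4+a^2*c^2+b^2*c^2)*q - b*c*(2*a^2+c^2)*r),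
      mul_nonneg (mul_nonneg (by positivity : (0:ℝ) ≤ a^2+c^2) hdet) (sq_nonneg r)]

private lemma diagReNonnegChoi {n : Type*} [Fintype n] [DecidableEq n] {x : Matrix n n ℂ}
    (hx : x.PosSemidef) (i : n) : 0 ≤ (x i i).re := by
  have h := hx.re_dotProduct_nonneg (Pi.single i 1)
  rw [Matrix.mulVec_single, ← Pi.single_star, single_dotProduct] at h
  simpa using h

private lemma entryBoundChoi {n : Type*} [Fintype n] [DecidableEq n] {x : Matrix n n ℂ}
    (hx : x.PosSemidef) (i j : n) (hij : i ≠ j) :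
    Complex.normSq (x i j) ≤ (x i i).re * (x j j).re := by
  by_cases h0 : x i j = 0
  · simp only [h0, map_zero]
    exact mul_nonneg (diagReNonnegChoi hx i) (diagReNonnegChoi hx j)
  · set N := Complex.normSq (x i j) with hN
    have hNpos : 0 < N := Complex.normSq_pos.mpr h0
    have hji : x j i = starRingEnd ℂ (x i j) := by
      have := congrFun (congrFun hx.isHermitian j) i
      simpa [Matrix.conjTranspose_apply] using this.symm
    have hquad : ∀ t : ℝ, 0 ≤ (N * (x i i).re) * (t*t) + (2*N) * t + (x j j).re := by
      intro t
      have h := hx.re_dotProduct_nonneg (Pi.single i ((t:ℂ) * x i j) + Pi.single j 1)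
      rw [star_add, mulVec_add, dotProduct_add, add_dotProduct, add_dotProduct,
        ← Pi.single_star, ← Pi.single_star, Matrix.mulVec_single, Matrix.mulVec_single,
        single_dotProduct, single_dotProduct,
        single_dotProduct, single_dotProduct] at h
      simp only [Pi.single_apply, hij, hij.symm, if_true, if_false, star_one, star_mul',
        Pi.smul_apply, MulOpposite.smul_eq_mul_unop, MulOpposite.unop_op, Matrix.col_apply,
        one_mul, mul_one, Complex.star_def, Complex.conj_ofReal, hji] at h
      simp only [RCLike.re_to_complex, map_add, Complex.add_re, Complex.mul_re, Complex.mul_im,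
        Complex.conj_re, Complex.conj_im, Complex.ofReal_re, Complex.ofReal_im] at h
      rw [hN]
      simp only [Complex.normSq_apply]
      nlinarith [h]
    have hd := discrim_le_zero hquad
    rw [discrim] at hd
    nlinarith [hd, hNpos]

/-- The diagonal part of the Choi map `ψ[2,0,1]` on `M₃(ℂ)`. -/
noncomputable def psiChoi (x : Matrix (Fin 3) (Fin 3) ℂ) : Matrix (Fin 3) (Fin 3) ℂ :=
  Matrix.diagonal ![2 * x 0 0 + x 2 2, 2 * x 1 1 + x 0 0, 2 * x 2 2 + x 1 1]

/-- The Choi map `φ[2,0,1](x) = ψ[2,0,1](x) − x`. -/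
noncomputable def phiChoi (x : Matrix (Fin 3) (Fin 3) ℂ) : Matrix (Fin 3) (Fin 3) ℂ :=
  psiChoi x - x

set_option maxHeartbeats 1000000 in
/-- The Choi map `φ[2,0,1]` is a positive map: it sends every positive semidefinite
3×3 matrix to a positive semidefinite matrix. -/
theorem phiChoi_positive (x : Matrix (Fin 3) (Fin 3) ℂ) (hx : x.PosSemidef) :
    (phiChoi x).PosSemidef := by
  have hH := hx.isHermitian
  have hd : ∀ i, x i i = ((x i i).re : ℂ) := by
    intro i
    have := congrFun (congrFun hH i) i
    rw [Matrix.conjTranspose_apply] at this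
    exact ((Complex.conj_eq_iff_re.mp this).symm)
  have herm : (phiChoi x).IsHermitian := by
    have hpsi : (psiChoi x).IsHermitian := by
      rw [psiChoi, hd 0, hd 1, hd 2]
      refine Matrix.isHermitian_diagonal_iff.mpr fun i => ?_
      fin_cases i <;>
        simp [_root_.IsSelfAdjoint, Complex.star_def, Complex.conj_ofReal]
    exact hpsi.sub hH
  refine posSemidef_iff_dotProduct_mulVec.mpr ⟨herm, fun v => ?_⟩
  have e10 : x 1 0 = starRingEnd ℂ (x 0 1) := by
    have := congrFun (congrFun hH 1) 0; rw [Matrix.conjTranspose_apply] at this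
    exact this.symm
  have e20 : x 2 0 = starRingEnd ℂ (x 0 2) := by
    have := congrFun (congrFun hH 2) 0; rw [Matrix.conjTranspose_apply] at this
    exact this.symm
  have e21 : x 2 1 = starRingEnd ℂ (x 1 2) := by
    have := congrFun (congrFun hH 2) 1; rw [Matrix.conjTranspose_apply] at this
    exact this.symm
  have expand : star v ⬝ᵥ phiChoi x *ᵥ v =
      ((((x 0 0).re + (x 2 2).re) * Complex.normSq (v 0)
        + ((x 0 0).re + (x 1 1).re) * Complex.normSq (v 1)
        + ((x 1 1).re + (x 2 2).re) * Complex.normSq (v 2)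
        - 2 * (starRingEnd ℂ (v 0) * x 0 1 * v 1).re
        - 2 * (starRingEnd ℂ (v 1) * x 1 2 * v 2).re
        - 2 * (starRingEnd ℂ (v 0) * x 0 2 * v 2).re : ℝ) : ℂ) := by
    have him : ∀ i : Fin 3, (x i i).im = 0 := by
      intro i
      have := congrFun (congrFun hH i) i
      rw [Matrix.conjTranspose_apply] at this
      exact Complex.conj_eq_iff_im.mp this
    apply Complex.ext <;>
      simp [phiChoi, psiChoi, dotProduct, mulVec, Fin.sum_univ_three, Matrix.diagonal,
        e10, e20, e21, him 0, him 1, him 2, Complex.normSq_apply,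
        Complex.mul_re, Complex.mul_im] <;>
      ring
  rw [expand, Complex.zero_le_real]
  have hA : 0 ≤ (x 0 0).re := diagReNonnegChoi hx 0
  have hB : 0 ≤ (x 1 1).re := diagReNonnegChoi hx 1
  have hC : 0 ≤ (x 2 2).re := diagReNonnegChoi hx 2
  set a := Real.sqrt (x 0 0).re with hadef
  set b := Real.sqrt (x 1 1).re with hbdef
  set c := Real.sqrt (x 2 2).re with hcdef
  have ha : 0 ≤ a := Real.sqrt_nonneg _
  have hb : 0 ≤ b := Real.sqrt_nonneg _
  have hc : 0 ≤ c := Real.sqrt_nonneg _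
  have ha2 : (x 0 0).re = a^2 := (Real.sq_sqrt hA).symm
  have hb2 : (x 1 1).re = b^2 := (Real.sq_sqrt hB).symm
  have hc2 : (x 2 2).re = c^2 := (Real.sq_sqrt hC).symm
  set p := ‖v 0‖ with hpdef
  set q := ‖v 1‖ with hqdef
  set r := ‖v 2‖ with hrdef
  have hp : 0 ≤ p := norm_nonneg _
  have hq : 0 ≤ q := norm_nonneg _
  have hr : 0 ≤ r := norm_nonneg _
  have hp2 : Complex.normSq (v 0) = p^2 := (Complex.sq_norm _).symm
  have hq2 : Complex.normSq (v 1) = q^2 := (Complex.sq_norm _).symm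
  have hr2 : Complex.normSq (v 2) = r^2 := (Complex.sq_norm _).symm
  have hab : ‖x 0 1‖ ≤ a * b := by
    have h := Real.sqrt_le_sqrt (entryBoundChoi hx 0 1 (by decide))
    rwa [Real.sqrt_mul hA, ← hadef, ← hbdef, ← Complex.norm_def] at h
  have hbc : ‖x 1 2‖ ≤ b * c := by
    have h := Real.sqrt_le_sqrt (entryBoundChoi hx 1 2 (by decide))
    rwa [Real.sqrt_mul hB, ← hbdef, ← hcdef, ← Complex.norm_def] at h
  have hac : ‖x 0 2‖ ≤ a * c := by
    have h := Real.sqrt_le_sqrt (entryBoundChoi hx 0 2 (by decide))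
    rwa [Real.sqrt_mul hA, ← hadef, ← hcdef, ← Complex.norm_def] at h
  have r01 : (starRingEnd ℂ (v 0) * x 0 1 * v 1).re ≤ a * b * (p * q) := by
    have h1 := Complex.re_le_norm (starRingEnd ℂ (v 0) * x 0 1 * v 1)
    rw [norm_mul, norm_mul, Complex.norm_conj, ← hpdef, ← hqdef] at h1
    nlinarith [norm_nonneg (x 0 1), mul_nonneg hp hq, h1]
  have r12 : (starRingEnd ℂ (v 1) * x 1 2 * v 2).re ≤ b * c * (q * r) := by
    have h1 := Complex.re_le_norm (starRingEnd ℂ (v 1) * x 1 2 * v 2)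
    rw [norm_mul, norm_mul, Complex.norm_conj, ← hqdef, ← hrdef] at h1
    nlinarith [norm_nonneg (x 1 2), mul_nonneg hq hr, h1]
  have r02 : (starRingEnd ℂ (v 0) * x 0 2 * v 2).re ≤ a * c * (p * r) := by
    have h1 := Complex.re_le_norm (starRingEnd ℂ (v 0) * x 0 2 * v 2)
    rw [norm_mul, norm_mul, Complex.norm_conj, ← hpdef, ← hrdef] at h1
    nlinarith [norm_nonneg (x 0 2), mul_nonneg hp hr, h1]
  rw [ha2, hb2, hc2, hp2, hq2, hr2]
  linarith [sixkeyChoi a b c p q r ha hb hc hp hq hr, r01, r12, r02]
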